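/- Let K and L be mutually dual closed convex cones in a real Hilbert space H. If P_K is L-isotone, then P_K is L-subadditive: for all x, y ∈ H, P_K(x) + P_K(y) − P_K(x + y) ∈ L. -/

import Mathlib

open RealInnerProductSpace

variable {H : Type*} [NormedAddCommGroup H] [InnerProductSpace ℝ H] [CompleteSpace H]

/-- `K` is a closed convex cone (containing `0`). -/
def IsClosedConvexCone (K : Set H) : Prop :=
  IsClosed K ∧ (0 : H) ∈ K ∧ (∀ x ∈ K, ∀ y ∈ K, x + y ∈ K) ∧
    ∀ x ∈ K, ∀ t : ℝ, 0 ≤ t → t • x ∈ K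

/-- The dual cone of a set. -/
def dualSet (K : Set H) : Set H := {y | ∀ x ∈ K, 0 ≤ ⟪x, y⟫}

/-- `P` is the metric projection onto `D`. -/
def IsMetricProj (D : Set H) (P : H → H) : Prop :=
  ∀ x, P x ∈ D ∧ ∀ y ∈ D, ‖x - P x‖ ≤ ‖x - y‖

/-- The translate `x - K`. -/
def meetSet (K : Set H) (x : H) : Set H := {z | ∃ k ∈ K, z = x - k}

/-- The translate `x + K`. -/
def joinSet (K : Set H) (x : H) : Set H := {z | ∃ k ∈ K, z = x + k}


lemma proj_fixed {K : Set H} {PK : H → H} (hPK : IsMetricProj K PK) {z : H} (hz : z ∈ K) :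
    PK z = z := by
  have h := (hPK z).2 z hz
  simp only [sub_self, norm_zero] at h
  have := norm_le_zero_iff.mp h
  have := sub_eq_zero.mp this
  exact this.symm

lemma resid_nonpos {K : Set H} (hK : IsClosedConvexCone K) {PK : H → H}
    (hPK : IsMetricProj K PK) (x k : H) (hk : k ∈ K) : ⟪k, x - PK x⟫ ≤ 0 := by
  obtain ⟨_, _, hadd, hsmul⟩ := hK
  by_contra h
  push_neg at h
  set c : ℝ := ⟪k, x - PK x⟫ with hc
  have hk2 : (0:ℝ) < ‖k‖ ^ 2 := by
    have hknz : k ≠ 0 := by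
      rintro rfl
      simp [hc, inner_zero_left] at h
    exact pow_pos (norm_pos_iff.mpr hknz) 2
  set t : ℝ := c / ‖k‖ ^ 2 with htdef
  have ht : 0 < t := div_pos h hk2
  have htc : t * ‖k‖ ^ 2 = c := by
    rw [htdef]; exact div_mul_cancel₀ c hk2.ne'
  have hmem : PK x + t • k ∈ K := hadd _ (hPK x).1 _ (hsmul k hk t ht.le)
  have hle := (hPK x).2 _ hmem
  have h2 : ‖x - PK x‖ ^ 2 ≤ ‖x - (PK x + t • k)‖ ^ 2 := by
    exact pow_le_pow_left₀ (norm_nonneg _) hle 2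
  have hexp : ‖x - (PK x + t • k)‖ ^ 2
      = ‖x - PK x‖ ^ 2 - 2 * (t * c) + t ^ 2 * ‖k‖ ^ 2 := by
    rw [sub_add_eq_sub_sub, norm_sub_sq_real, real_inner_smul_right, norm_smul,
      real_inner_comm, ← hc, mul_pow, Real.norm_eq_abs, sq_abs]
  have h3 : t ^ 2 * ‖k‖ ^ 2 = t * c := by
    rw [← htc]; ring
  rw [hexp, h3] at h2
  nlinarith

theorem L_isotone_implies_L_subadditive (K L : Set H) (hK : IsClosedConvexCone K)
    (hL : L = dualSet K) (hKL : K = dualSet L)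
    (PK : H → H) (hPK : IsMetricProj K PK)
    (hiso : ∀ u v : H, v - u ∈ L → PK v - PK u ∈ L) :
    ∀ x y : H, PK x + PK y - PK (x + y) ∈ L := by
  intro x y
  have hvK : PK x + PK y ∈ K := hK.2.2.1 _ (hPK x).1 _ (hPK y).1
  have hdiff : (PK x + PK y) - (x + y) ∈ L := by
    rw [hL]
    intro k hk
    have h1 := resid_nonpos hK hPK x k hk
    have h2 := resid_nonpos hK hPK y k hk
    have : (PK x + PK y) - (x + y) = (PK x - x) + (PK y - y) := by abel
    rw [this, inner_add_right]
    have e1 : ⟪k, PK x - x⟫ = -⟪k, x - PK x⟫ := by rw [← inner_neg_right]; congr 1; abel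
    have e2 : ⟪k, PK y - y⟫ = -⟪k, y - PK y⟫ := by rw [← inner_neg_right]; congr 1; abel
    rw [e1, e2]
    linarith
  have := hiso (x + y) (PK x + PK y) hdiff
  rwa [proj_fixed hPK hvK] at this
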